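/- Fix σ > 0 and define F_σ : [−1,1] → [−1,1] by F_σ(x) = B(x)/√( B(x)² + A(x) ) where B(x) = 1 − 2Q(x/σ) + (2σx/√(2π)) e^{−x²/(2σ²)} and A(x) = (2σ²(1−x²)/π) e^{−x²/σ²}. Then: (i) F_σ is odd, i.e. F_σ(−x) = −F_σ(x); (ii) for every x ∈ [0,1], x ≤ F_σ(x) ≤ 1, and for every x ∈ [−1,0], −1 ≤ F_σ(x) ≤ x; (iii) consequently the iterates F_σ^{(t)} (with F_σ^{(0)}(x) = x and F_σ^{(t+1)} = F_σ ∘ F_σ^{(t)}) satisfy F_σ^{(t+1)}(x) ≥ F_σ^{(t)}(x) for all x ∈ [0,1] and all t ≥ 0, and F_σ^{(t+1)}(x) ≤ F_σ^{(t)}(x) for all x ∈ [−1,0] and all t ≥ 0. -/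

import Mathlib

open MeasureTheory ProbabilityTheory Real
open scoped ENNReal NNReal

/-- The standard normal CDF Φ. -/
noncomputable def stdPhi (x : ℝ) : ℝ := (gaussianReal 0 1 (Set.Iic x)).toReal

/-- Q = 1 - Φ. -/
noncomputable def stdQ (x : ℝ) : ℝ := 1 - stdPhi x

/-- Euclidean dot product on `Fin d → ℝ`. -/
def dotp {d : ℕ} (a b : Fin d → ℝ) : ℝ := ∑ i, a i * b i

/-- Isotropic Gaussian `N(m, v I_d)` on `Fin d → ℝ` (v is the variance). -/
noncomputable def gaussPi (d : ℕ) (m : Fin d → ℝ) (v : ℝ) : Measure (Fin d → ℝ) :=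
  Measure.pi fun i => gaussianReal (m i) (Real.toNNReal v)

/-- Joint law of `(X, Y)` for the binary Gaussian mixture model bGMM(μ, σ):
`Y` uniform on `{-1, 1}` and `X | Y ∼ N(Yμ, σ² I_d)`. -/
noncomputable def bGMM (d : ℕ) (m : Fin d → ℝ) (σ : ℝ) : Measure ((Fin d → ℝ) × ℝ) :=
  (1/2 : ℝ≥0∞) • (gaussPi d m (σ^2)).map (fun x => (x, (1:ℝ)))
    + (1/2 : ℝ≥0∞) • (gaussPi d (-m) (σ^2)).map (fun x => (x, (-1:ℝ)))

/-- The marginal mixture `p_μ = ½ N(μ, σ² I_d) + ½ N(-μ, σ² I_d)`. -/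
noncomputable def gmix (d : ℕ) (m : Fin d → ℝ) (σ : ℝ) : Measure (Fin d → ℝ) :=
  (1/2 : ℝ≥0∞) • gaussPi d m (σ^2) + (1/2 : ℝ≥0∞) • gaussPi d (-m) (σ^2)

/-- Sign function with values in `{-1, 1}`. -/
noncomputable def sgn (u : ℝ) : ℝ := if 0 < u then 1 else -1

/-- `B(x) = 1 − 2Q(x/σ) + (2σx/√(2π)) e^{−x²/(2σ²)}`. -/
noncomputable def Bfun (σ x : ℝ) : ℝ :=
  1 - 2 * stdQ (x/σ) + (2*σ*x/Real.sqrt (2*π)) * Real.exp (-x^2/(2*σ^2))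

/-- `A(x) = (2σ²(1−x²)/π) e^{−x²/σ²}`. -/
noncomputable def Afun (σ x : ℝ) : ℝ := (2*σ^2*(1-x^2)/π) * Real.exp (-x^2/σ^2)

/-- The correlation evolution function `F_σ(x) = B(x)/√(B(x)² + A(x))`. -/
noncomputable def Fsig (σ x : ℝ) : ℝ := Bfun σ x / Real.sqrt ((Bfun σ x)^2 + Afun σ x)


lemma gauss_map_neg' : (gaussianReal 0 1).map (fun y : ℝ => -y) = gaussianReal 0 1 := by
  have h := gaussianReal_map_const_mul (μ := 0) (v := 1) (-1)
  simpa using h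

lemma gauss_singleton' (x : ℝ) : gaussianReal 0 1 {x} = 0 :=
  gaussianReal_absolutelyContinuous 0 one_ne_zero (measure_singleton x)

lemma stdPhi_neg (x : ℝ) : stdPhi (-x) = 1 - stdPhi x := by
  have hmap : gaussianReal 0 1 (Set.Iic (-x)) = gaussianReal 0 1 (Set.Ici x) := by
    conv_lhs => rw [← gauss_map_neg']
    rw [Measure.map_apply measurable_neg measurableSet_Iic]
    congr 1
    ext y
    simp [neg_le]
  have hIio : gaussianReal 0 1 (Set.Iio x) = gaussianReal 0 1 (Set.Iic x) := by
    rw [← Set.Iio_union_right (a := x), measure_union (by simp) (measurableSet_singleton x),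
      gauss_singleton', add_zero]
  have hcompl : gaussianReal 0 1 (Set.Ici x) = 1 - gaussianReal 0 1 (Set.Iic x) := by
    rw [← Set.compl_Iio, measure_compl measurableSet_Iio (measure_ne_top _ _), hIio]
    simp
  have hle : gaussianReal 0 1 (Set.Iic x) ≤ 1 := prob_le_one
  unfold stdPhi
  rw [hmap, hcompl, ENNReal.toReal_sub_of_le hle (by simp)]
  simp

lemma stdPhi_mono : Monotone stdPhi := by
  intro a b hab
  exact ENNReal.toReal_mono (measure_ne_top _ _) (measure_mono (Set.Iic_subset_Iic.mpr hab))

lemma stdPhi_half_le {x : ℝ} (hx : 0 ≤ x) : (1:ℝ)/2 ≤ stdPhi x := by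
  have h0 : stdPhi 0 = 1/2 := by
    have := stdPhi_neg 0
    simp at this; linarith
  calc (1:ℝ)/2 = stdPhi 0 := h0.symm
    _ ≤ stdPhi x := stdPhi_mono hx

lemma Bfun_neg (σ x : ℝ) : Bfun σ (-x) = -(Bfun σ x) := by
  unfold Bfun stdQ
  have : -x/σ = -(x/σ) := by ring
  rw [this, stdPhi_neg]
  ring_nf

lemma Afun_neg (σ x : ℝ) : Afun σ (-x) = Afun σ x := by unfold Afun; ring_nf

lemma Fsig_neg (σ x : ℝ) : Fsig σ (-x) = -(Fsig σ x) := by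
  unfold Fsig
  rw [Bfun_neg, Afun_neg, neg_sq, neg_div]

lemma Fsig_main (σ : ℝ) (hσ : 0 < σ) {x : ℝ} (hx : x ∈ Set.Icc (0:ℝ) 1) :
    x ≤ Fsig σ x ∧ Fsig σ x ≤ 1 := by
  obtain ⟨hx0, hx1⟩ := hx
  set B := Bfun σ x with hBdef
  set A := Afun σ x with hAdef
  set c := (2*σ*x/Real.sqrt (2*π)) * Real.exp (-x^2/(2*σ^2)) with hcdef
  have hπ : 0 < π := Real.pi_pos
  have hsqrt2π : 0 < Real.sqrt (2*π) := Real.sqrt_pos.mpr (by positivity)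
  have hc0 : 0 ≤ c := by positivity
  have hPhi : (1:ℝ)/2 ≤ stdPhi (x/σ) := stdPhi_half_le (by positivity)
  have hBc : c ≤ B := by
    rw [hBdef]; unfold Bfun stdQ; rw [hcdef]; nlinarith
  have hB0 : 0 ≤ B := le_trans hc0 hBc
  have hA0 : 0 ≤ A := by
    rw [hAdef]; unfold Afun
    have : 0 ≤ 1 - x^2 := by nlinarith
    positivity
  have hc2 : c^2 = x^2 * (2*σ^2/π) * Real.exp (-x^2/σ^2) := by
    rw [hcdef]
    have hs : Real.sqrt (2*π) ^ 2 = 2*π := Real.sq_sqrt (by positivity)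
    have he : Real.exp (-x^2/(2*σ^2)) ^ 2 = Real.exp (-x^2/σ^2) := by
      rw [sq, ← Real.exp_add]; congr 1; field_simp; ring
    rw [mul_pow, div_pow, hs, he]
    field_simp
  have hkey : x^2 * (B^2 + A) ≤ B^2 := by
    have hAx : x^2 * A = (1 - x^2) * c^2 := by
      rw [hAdef, hc2]; unfold Afun; ring
    have h1 : c^2 ≤ B^2 := by nlinarith
    have h2 : 0 ≤ 1 - x^2 := by nlinarith
    nlinarith [mul_nonneg h2 (by linarith : 0 ≤ B^2 - c^2)]
  have hSpos : 0 < B^2 + A := by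
    rcases eq_or_lt_of_le hx0 with h0 | hpos
    · have : A = 2*σ^2/π * Real.exp (-x^2/σ^2) := by
        rw [hAdef]; unfold Afun; rw [← h0]; ring_nf
      have hApos : 0 < A := by rw [this]; positivity
      nlinarith [sq_nonneg B]
    · have hc' : 0 < c := by rw [hcdef]; positivity
      have : 0 < B := lt_of_lt_of_le hc' hBc
      nlinarith
  have hS : 0 < Real.sqrt (B^2 + A) := Real.sqrt_pos.mpr hSpos
  have hS2 : Real.sqrt (B^2 + A) ^ 2 = B^2 + A := Real.sq_sqrt hSpos.le
  constructor
  · rw [Fsig, ← hBdef, ← hAdef, le_div_iff₀ hS]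
    nlinarith [mul_nonneg hx0 hS.le]
  · rw [Fsig, ← hBdef, ← hAdef, div_le_one hS]
    nlinarith


/-- properties of `F_σ`: (i) odd; (ii) `x ≤ F_σ(x) ≤ 1` on `[0,1]` and
`−1 ≤ F_σ(x) ≤ x` on `[−1,0]`; (iii) the iterates are monotone in `t` pointwise, increasing
on `[0,1]` and decreasing on `[−1,0]`. -/
theorem stmt19 (σ : ℝ) (hσ : 0 < σ) :
    (∀ x ∈ Set.Icc (-1:ℝ) 1, Fsig σ (-x) = -(Fsig σ x)) ∧
    (∀ x ∈ Set.Icc (0:ℝ) 1, x ≤ Fsig σ x ∧ Fsig σ x ≤ 1) ∧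
    (∀ x ∈ Set.Icc (-1:ℝ) 0, -1 ≤ Fsig σ x ∧ Fsig σ x ≤ x) ∧
    (∀ x ∈ Set.Icc (0:ℝ) 1, ∀ t : ℕ, (Fsig σ)^[t] x ≤ (Fsig σ)^[t+1] x) ∧
    (∀ x ∈ Set.Icc (-1:ℝ) 0, ∀ t : ℕ, (Fsig σ)^[t+1] x ≤ (Fsig σ)^[t] x) := by
  have hodd : ∀ x : ℝ, Fsig σ (-x) = -(Fsig σ x) := Fsig_neg σ
  have hpos : ∀ x ∈ Set.Icc (0:ℝ) 1, x ≤ Fsig σ x ∧ Fsig σ x ≤ 1 := fun x hx => Fsig_main σ hσ hx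
  have hneg : ∀ x ∈ Set.Icc (-1:ℝ) 0, -1 ≤ Fsig σ x ∧ Fsig σ x ≤ x := by
    intro x hx
    have hx' : -x ∈ Set.Icc (0:ℝ) 1 := ⟨by linarith [hx.2], by linarith [hx.1]⟩
    obtain ⟨h1, h2⟩ := hpos (-x) hx'
    have := hodd (-x)
    rw [neg_neg] at this
    constructor <;> linarith
  have hmapsP : ∀ x ∈ Set.Icc (0:ℝ) 1, Fsig σ x ∈ Set.Icc (0:ℝ) 1 := by
    intro x hx
    obtain ⟨h1, h2⟩ := hpos x hx
    exact ⟨le_trans hx.1 h1, h2⟩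
  have hmapsN : ∀ x ∈ Set.Icc (-1:ℝ) 0, Fsig σ x ∈ Set.Icc (-1:ℝ) 0 := by
    intro x hx
    obtain ⟨h1, h2⟩ := hneg x hx
    exact ⟨h1, le_trans h2 hx.2⟩
  have hiterP : ∀ x ∈ Set.Icc (0:ℝ) 1, ∀ t : ℕ, (Fsig σ)^[t] x ∈ Set.Icc (0:ℝ) 1 := by
    intro x hx t
    induction t with
    | zero => simpa using hx
    | succ n ih => rw [Function.iterate_succ_apply']; exact hmapsP _ ih
  have hiterN : ∀ x ∈ Set.Icc (-1:ℝ) 0, ∀ t : ℕ, (Fsig σ)^[t] x ∈ Set.Icc (-1:ℝ) 0 := by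
    intro x hx t
    induction t with
    | zero => simpa using hx
    | succ n ih => rw [Function.iterate_succ_apply']; exact hmapsN _ ih
  refine ⟨fun x _ => hodd x, hpos, hneg, ?_, ?_⟩
  · intro x hx t
    rw [Function.iterate_succ_apply']
    exact (hpos _ (hiterP x hx t)).1
  · intro x hx t
    rw [Function.iterate_succ_apply']
    exact (hneg _ (hiterN x hx t)).2
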